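/- arXiv:2110.15653 — 2 statements merged into one kernel-verified Lean document; each statement's English description precedes it below -/
import Mathlib

section
/- Let Σ be an m×m real symmetric positive definite matrix, μ ∈ ℝ^m, Ω ≥ 0, and let E = { c ∈ ℝ^m : (c − μ)ᵀ Σ⁻¹ (c − μ) ≤ Ω² }. If x ∈ ℝ^m satisfies xᵀΣx > 0, then the vector c* = μ + Ω·(Σx)/√(xᵀΣx) belongs to E and attains the maximum of c ↦ cᵀx over E, i.e., (c*)ᵀx = μᵀx + Ω·√(xᵀΣx). -/
open Matrix

lemma posdef_dot_nonneg {m : ℕ} {M : Matrix (Fin m) (Fin m) ℝ} (hM : M.PosDef)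
    (w : Fin m → ℝ) : 0 ≤ w ⬝ᵥ (M *ᵥ w) := by
  have := hM.posSemidef.re_dotProduct_nonneg w
  simpa using this

lemma posdef_symm_dot {m : ℕ} {M : Matrix (Fin m) (Fin m) ℝ} (hM : M.PosDef)
    (u v : Fin m → ℝ) : u ⬝ᵥ (M *ᵥ v) = v ⬝ᵥ (M *ᵥ u) := by
  have h : Mᵀ = M := by simpa using hM.isHermitian.eq
  rw [dotProduct_mulVec, ← mulVec_transpose, h, dotProduct_comm]

lemma posdef_cauchy_schwarz {m : ℕ} {M : Matrix (Fin m) (Fin m) ℝ} (hM : M.PosDef)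
    (u v : Fin m → ℝ) :
    (u ⬝ᵥ (M *ᵥ v)) ^ 2 ≤ (u ⬝ᵥ (M *ᵥ u)) * (v ⬝ᵥ (M *ᵥ v)) := by
  have key : ∀ t : ℝ,
      0 ≤ (v ⬝ᵥ (M *ᵥ v)) * (t * t) + (2 * (u ⬝ᵥ (M *ᵥ v))) * t + (u ⬝ᵥ (M *ᵥ u)) := by
    intro t
    have h0 := posdef_dot_nonneg hM (u + t • v)
    have hsymm := posdef_symm_dot hM v u
    simp only [mulVec_add, mulVec_smul, add_dotProduct, dotProduct_add, smul_dotProduct,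
      dotProduct_smul, smul_eq_mul] at h0
    rw [hsymm] at h0
    nlinarith [h0]
  have hd := discrim_le_zero key
  rw [discrim] at hd
  nlinarith [hd]

/-- If `xᵀ S x > 0`, the vector `c* = μ + Ω (S x)/√(xᵀ S x)` lies in the ellipsoid
`E = {c | (c-μ)ᵀ S⁻¹ (c-μ) ≤ Ω²}` and maximizes `c ↦ c ⬝ᵥ x` over `E`, achieving the value
`μ ⬝ᵥ x + Ω √(xᵀ S x)`. -/
theorem ellipsoid_argmax_linear {m : ℕ} (S : Matrix (Fin m) (Fin m) ℝ) (hS : S.PosDef)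
    (μ : Fin m → ℝ) (Ω : ℝ) (hΩ : 0 ≤ Ω) (x : Fin m → ℝ)
    (hx : 0 < x ⬝ᵥ (S *ᵥ x)) :
    let cstar : Fin m → ℝ := μ + (Ω / Real.sqrt (x ⬝ᵥ (S *ᵥ x))) • (S *ᵥ x)
    (cstar - μ) ⬝ᵥ (S⁻¹ *ᵥ (cstar - μ)) ≤ Ω ^ 2 ∧
    (∀ c : Fin m → ℝ, (c - μ) ⬝ᵥ (S⁻¹ *ᵥ (c - μ)) ≤ Ω ^ 2 → c ⬝ᵥ x ≤ cstar ⬝ᵥ x) ∧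
    cstar ⬝ᵥ x = μ ⬝ᵥ x + Ω * Real.sqrt (x ⬝ᵥ (S *ᵥ x)) := by
  intro cstar
  set q : ℝ := x ⬝ᵥ (S *ᵥ x) with hq
  have hq0 : 0 < q := hx
  have hsq : 0 < Real.sqrt q := Real.sqrt_pos.2 hq0
  have hsqsq : Real.sqrt q * Real.sqrt q = q := Real.mul_self_sqrt hq0.le
  have hdet : IsUnit S.det := isUnit_iff_ne_zero.2 hS.det_pos.ne'
  have hinv : S⁻¹ *ᵥ (S *ᵥ x) = x := by
    rw [mulVec_mulVec, nonsing_inv_mul S hdet, one_mulVec]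
  have hcm : cstar - μ = (Ω / Real.sqrt q) • (S *ᵥ x) := by
    simp only [cstar, ← hq, add_sub_cancel_left]
  have hSxx : (S *ᵥ x) ⬝ᵥ x = q := by rw [dotProduct_comm, ← hq]
  have hdivq : Ω / Real.sqrt q * q = Ω * Real.sqrt q := by
    field_simp
    linear_combination (-Ω) * hsqsq
  have hval : cstar ⬝ᵥ x = μ ⬝ᵥ x + Ω * Real.sqrt q := by
    simp only [cstar, add_dotProduct, smul_dotProduct, smul_eq_mul, hSxx, ← hq, hdivq]
  have hmem : (cstar - μ) ⬝ᵥ (S⁻¹ *ᵥ (cstar - μ)) ≤ Ω ^ 2 := by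
    rw [hcm, mulVec_smul, hinv, smul_dotProduct, dotProduct_smul, smul_eq_mul, smul_eq_mul,
      hSxx, hdivq]
    have : Ω / Real.sqrt q * (Ω * Real.sqrt q) = Ω * Ω * (Real.sqrt q / Real.sqrt q) := by ring
    rw [this, div_self hsq.ne', mul_one, sq]
  refine ⟨hmem, ?_, hval⟩
  intro c hc
  have hSinv : S⁻¹.PosDef := hS.inv
  have hcs := posdef_cauchy_schwarz hSinv (c - μ) (S *ᵥ x)
  rw [hinv, hSxx] at hcs
  have hnn : 0 ≤ (c - μ) ⬝ᵥ (S⁻¹ *ᵥ (c - μ)) := posdef_dot_nonneg hSinv _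
  have h1 : ((c - μ) ⬝ᵥ x) ^ 2 ≤ Ω ^ 2 * q :=
    hcs.trans (mul_le_mul_of_nonneg_right hc hq0.le)
  have h2 : (c - μ) ⬝ᵥ x ≤ Ω * Real.sqrt q := by
    nlinarith [hsqsq, hsq, mul_nonneg hΩ hsq.le]
  have h4 : c ⬝ᵥ x = μ ⬝ᵥ x + (c - μ) ⬝ᵥ x := by
    rw [sub_dotProduct]; ring
  rw [hval, h4]
  linarith
end

section
/- Let Σ be an m×m real symmetric positive definite matrix, μ ∈ ℝ^m, Ω ≥ 0, let E = { c ∈ ℝ^m : (c − μ)ᵀ Σ⁻¹ (c − μ) ≤ Ω² }, and let X be a nonempty finite subset of ℝ^m. Then the min-max robust problem reduces to a smooth problem: min over x ∈ X of (sup over c ∈ E of cᵀx) equals min over x ∈ X of (μᵀx + Ω·√(xᵀΣx)). -/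
open Matrix
open scoped MatrixOrder

private lemma dot_cs {m : ℕ} (u v : Fin m → ℝ) :
    (u ⬝ᵥ v) ^ 2 ≤ (u ⬝ᵥ u) * (v ⬝ᵥ v) := by
  simpa [dotProduct, pow_two, mul_comm, mul_assoc, mul_left_comm] using
    Finset.sum_mul_sq_le_sq_mul_sq Finset.univ u v

private lemma sym_dot {m : ℕ} (M : Matrix (Fin m) (Fin m) ℝ) (hM : Mᵀ = M)
    (u v : Fin m → ℝ) : (M *ᵥ u) ⬝ᵥ v = u ⬝ᵥ (M *ᵥ v) := by
  rw [dotProduct_comm, Matrix.dotProduct_mulVec, ← Matrix.mulVec_transpose, hM,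
    dotProduct_comm]

private lemma key_sup {m : ℕ} (S : Matrix (Fin m) (Fin m) ℝ) (hS : S.PosDef)
    (μ : Fin m → ℝ) (Ω : ℝ) (hΩ : 0 ≤ Ω) (x : Fin m → ℝ) :
    sSup ((fun c => c ⬝ᵥ x) ''
        {c : Fin m → ℝ | (c - μ) ⬝ᵥ (S⁻¹ *ᵥ (c - μ)) ≤ Ω ^ 2})
      = μ ⬝ᵥ x + Ω * Real.sqrt (x ⬝ᵥ (S *ᵥ x)) := by
  have hSd : IsUnit S.det := isUnit_iff_ne_zero.mpr hS.det_pos.ne'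
  have hSsym : Sᵀ = S := hS.isHermitian.eq
  set B := CFC.sqrt S with hBdef
  have hB2 : B * B = S := CFC.sqrt_mul_sqrt_self S hS.posSemidef.nonneg
  have hBsym : Bᵀ = B := (CFC.sqrt_nonneg S).posSemidef.isHermitian.eq
  have hBd : IsUnit B.det := by
    have h : B.det * B.det = S.det := by rw [← Matrix.det_mul, hB2]
    rw [isUnit_iff_ne_zero] at *
    intro h0
    exact hSd (by rw [← h, h0, mul_zero])
  have hBinv : B⁻¹ * B = 1 := Matrix.nonsing_inv_mul B hBd
  have hBinvsym : (B⁻¹)ᵀ = B⁻¹ := by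
    rw [Matrix.transpose_nonsing_inv, hBsym]
  have hSinv : S⁻¹ = B⁻¹ * B⁻¹ := by rw [← hB2, Matrix.mul_inv_rev]
  set t := x ⬝ᵥ (S *ᵥ x) with htdef
  have ht0 : 0 ≤ t := by simpa using hS.posSemidef.dotProduct_mulVec_nonneg x
  have hμmem : μ ∈ {c : Fin m → ℝ | (c - μ) ⬝ᵥ (S⁻¹ *ᵥ (c - μ)) ≤ Ω ^ 2} := by
    simp [Set.mem_setOf_eq, sub_self, sq_nonneg]
  -- upper bound for all members
  have ub : ∀ c ∈ {c : Fin m → ℝ | (c - μ) ⬝ᵥ (S⁻¹ *ᵥ (c - μ)) ≤ Ω ^ 2},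
      c ⬝ᵥ x ≤ μ ⬝ᵥ x + Ω * Real.sqrt t := by
    intro c hc
    set d := c - μ with hd
    have hcd : c = d + μ := by rw [hd]; ring
    have key : d ⬝ᵥ x ≤ Ω * Real.sqrt t := by
      set u := B⁻¹ *ᵥ d with hu
      set v := B *ᵥ x with hv
      have huv : u ⬝ᵥ v = d ⬝ᵥ x := by
        rw [hu, hv, sym_dot B⁻¹ hBinvsym d (B *ᵥ x), Matrix.mulVec_mulVec, hBinv,
          Matrix.one_mulVec]
      have huu : u ⬝ᵥ u = d ⬝ᵥ (S⁻¹ *ᵥ d) := by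
        rw [hu, sym_dot B⁻¹ hBinvsym d (B⁻¹ *ᵥ d), Matrix.mulVec_mulVec, ← hSinv]
      have hvv : v ⬝ᵥ v = t := by
        rw [hv, sym_dot B hBsym x (B *ᵥ x), Matrix.mulVec_mulVec, hB2, htdef]
      have hcs : (d ⬝ᵥ x) ^ 2 ≤ Ω ^ 2 * t := by
        calc (d ⬝ᵥ x) ^ 2 = (u ⬝ᵥ v) ^ 2 := by rw [huv]
          _ ≤ (u ⬝ᵥ u) * (v ⬝ᵥ v) := dot_cs u v
          _ ≤ Ω ^ 2 * t := by
              rw [huu, hvv]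
              exact mul_le_mul_of_nonneg_right hc ht0
      calc d ⬝ᵥ x ≤ |d ⬝ᵥ x| := le_abs_self _
        _ = Real.sqrt ((d ⬝ᵥ x) ^ 2) := (Real.sqrt_sq_eq_abs _).symm
        _ ≤ Real.sqrt (Ω ^ 2 * t) := Real.sqrt_le_sqrt hcs
        _ = Ω * Real.sqrt t := by
            rw [Real.sqrt_mul (sq_nonneg Ω), Real.sqrt_sq hΩ]
    calc c ⬝ᵥ x = d ⬝ᵥ x + μ ⬝ᵥ x := by rw [hcd, add_dotProduct]
      _ ≤ Ω * Real.sqrt t + μ ⬝ᵥ x := by linarith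
      _ = μ ⬝ᵥ x + Ω * Real.sqrt t := by ring
  -- the bound is attained
  have hmem : (μ ⬝ᵥ x + Ω * Real.sqrt t) ∈ ((fun c => c ⬝ᵥ x) ''
      {c : Fin m → ℝ | (c - μ) ⬝ᵥ (S⁻¹ *ᵥ (c - μ)) ≤ Ω ^ 2}) := by
    by_cases hx : x = 0
    · refine ⟨μ, hμmem, ?_⟩
      subst hx
      simp [htdef]
    · have ht : 0 < t := by simpa [htdef] using hS.dotProduct_mulVec_pos hx
      have hst : 0 < Real.sqrt t := Real.sqrt_pos.mpr ht
      have hSxx : (S *ᵥ x) ⬝ᵥ x = t := by rw [dotProduct_comm (S *ᵥ x) x, ← htdef]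
      refine ⟨μ + (Ω / Real.sqrt t) • (S *ᵥ x), ?_, ?_⟩
      · show (μ + (Ω / Real.sqrt t) • (S *ᵥ x) - μ) ⬝ᵥ
          (S⁻¹ *ᵥ (μ + (Ω / Real.sqrt t) • (S *ᵥ x) - μ)) ≤ Ω ^ 2
        rw [add_sub_cancel_left, Matrix.mulVec_smul, Matrix.mulVec_mulVec,
          Matrix.nonsing_inv_mul S hSd, Matrix.one_mulVec, smul_dotProduct,
          dotProduct_smul, smul_eq_mul, smul_eq_mul, hSxx]
        have heq : Ω / Real.sqrt t * (Ω / Real.sqrt t * t) = Ω ^ 2 := by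
          have h2 : Real.sqrt t ^ 2 = t := Real.sq_sqrt ht0
          have h3 : Ω / Real.sqrt t * (Ω / Real.sqrt t * t)
              = Ω ^ 2 * (t / Real.sqrt t ^ 2) := by ring
          rw [h3, h2, div_self ht.ne', mul_one]
        exact le_of_eq heq
      · show (μ + (Ω / Real.sqrt t) • (S *ᵥ x)) ⬝ᵥ x = μ ⬝ᵥ x + Ω * Real.sqrt t
        rw [add_dotProduct, smul_dotProduct, smul_eq_mul, hSxx,
          div_mul_eq_mul_div, mul_div_assoc, Real.div_sqrt]
  refine le_antisymm (csSup_le ⟨_, hmem⟩ ?_) (le_csSup ⟨μ ⬝ᵥ x + Ω * Real.sqrt t, ?_⟩ hmem)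
  · rintro y ⟨c, hc, rfl⟩
    exact ub c hc
  · rintro y ⟨c, hc, rfl⟩
    exact ub c hc

/-- Min-max robust problem over a nonempty finite feasible set `X` with ellipsoidal
uncertainty set reduces to the smooth problem `min_{x∈X} μᵀx + Ω √(xᵀ S x)`. -/
theorem robust_minmax_reduction {m : ℕ} (S : Matrix (Fin m) (Fin m) ℝ) (hS : S.PosDef)
    (μ : Fin m → ℝ) (Ω : ℝ) (hΩ : 0 ≤ Ω)
    (X : Finset (Fin m → ℝ)) (hX : X.Nonempty) :
    X.inf' hX (fun x => sSup ((fun c => c ⬝ᵥ x) ''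
        {c : Fin m → ℝ | (c - μ) ⬝ᵥ (S⁻¹ *ᵥ (c - μ)) ≤ Ω ^ 2}))
      = X.inf' hX (fun x => μ ⬝ᵥ x + Ω * Real.sqrt (x ⬝ᵥ (S *ᵥ x))) := by
  apply Finset.inf'_congr hX rfl
  intro x _
  exact key_sup S hS μ Ω hΩ x
end
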